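/- For every T > 0, L₁ > 0 and β₀ > 0 there exists δ > 0 such that for every L₂ with 0 < L₂ < δ, both tail integrals diverge past T: ∫_{L₁}^{∞} G(y)⁻¹ dy > T and ∫_{−∞}^{−L₁} G(y)⁻¹ dy > T (the integrals taken with values in [0,∞]). Equivalently, with t₁ = T − ∫_{−∞}^{−L₁} G(y)⁻¹ dy, t₂ = T − ∫_{L₁}^{∞} G(y)⁻¹ dy and t* = max(t₁, t₂), one has t* < 0. -/

import Mathlib

open MeasureTheory

/-- The generator bound `G` for the quadratic first-order adjoint BSDE. -/
noncomputable def Gfun (L₁ L₂ β₀ : ℝ) (y : ℝ) : ℝ :=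
  L₁ + (L₂ + L₁ + β₀⁻¹ * L₁ * L₂) * |y|
    + (L₂ + β₀⁻¹ * (L₁ * L₂ + L₂ ^ 2)) * y ^ 2 + β₀⁻¹ * L₂ ^ 2 * |y| ^ 3

lemma Gfun_continuous (L₁ L₂ β₀ : ℝ) : Continuous (Gfun L₁ L₂ β₀) := by
  unfold Gfun; fun_prop

lemma Gfun_pos (L₁ L₂ β₀ : ℝ) (hL₁ : 0 < L₁) (hL₂ : 0 < L₂) (hβ₀ : 0 < β₀) (y : ℝ) :
    0 < Gfun L₁ L₂ β₀ y := by
  unfold Gfun; positivity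

lemma Gfun_neg (L₁ L₂ β₀ y : ℝ) : Gfun L₁ L₂ β₀ (-y) = Gfun L₁ L₂ β₀ y := by
  simp [Gfun, abs_neg, neg_sq]

lemma lintegral_Iic_neg (a : ℝ) (f : ℝ → ENNReal) :
    ∫⁻ y in Set.Iic (-a), f y = ∫⁻ y in Set.Ici a, f (-y) := by
  have h := (Measure.measurePreserving_neg (volume : Measure ℝ)).setLIntegral_comp_preimage_emb
    (MeasurableEquiv.neg ℝ).measurableEmbedding f (Set.Iic (-a))
  have hpre : (Neg.neg : ℝ → ℝ) ⁻¹' Set.Iic (-a) = Set.Ici a := by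
    ext x; simp
  rw [hpre] at h
  exact h.symm

lemma key_lower (T L₁ β₀ : ℝ) (hT : 0 < T) (hL₁ : 0 < L₁) (hβ₀ : 0 < β₀)
    (M : ℝ) (hMdef : M = L₁ * Real.exp ((L₁ + 2) * (T + 1)))
    (L₂ : ℝ) (hL₂ : 0 < L₂) (hL₂1 : L₂ < 1)
    (hsmall : L₂ * ((1 + β₀⁻¹ * L₁) + (1 + β₀⁻¹ * L₁ + β₀⁻¹) * M + β₀⁻¹ * M ^ 2) ≤ 1) :
    ENNReal.ofReal T < ∫⁻ y in Set.Ici L₁, ENNReal.ofReal ((Gfun L₁ L₂ β₀ y)⁻¹) := by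
  have hexp : 1 < Real.exp ((L₁ + 2) * (T + 1)) := by
    rw [show (1:ℝ) = Real.exp 0 by simp]
    exact Real.exp_lt_exp.2 (by positivity)
  have hM : L₁ < M := by
    rw [hMdef]; nlinarith
  have hMpos : 0 < M := lt_trans hL₁ hM
  have hb : (0:ℝ) < β₀⁻¹ := by positivity
  have hL₂sq : L₂ ^ 2 ≤ L₂ := by nlinarith
  -- coefficient bound
  have hK : 1 + (L₂ + L₁ + β₀⁻¹ * L₁ * L₂)
      + (L₂ + β₀⁻¹ * (L₁ * L₂ + L₂ ^ 2)) * M + β₀⁻¹ * L₂ ^ 2 * M ^ 2 ≤ L₁ + 2 := by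
    nlinarith [mul_le_mul_of_nonneg_right hL₂sq (mul_nonneg hb.le (sq_nonneg M)),
      mul_le_mul_of_nonneg_right hL₂sq (mul_nonneg hb.le hMpos.le),
      mul_le_mul_of_nonneg_right hL₂sq hMpos.le]
  -- pointwise bound: on Ioc L₁ M, Gfun ≤ (L₁+2) * y
  have hbound : ∀ y ∈ Set.Ioc L₁ M, Gfun L₁ L₂ β₀ y ≤ (L₁ + 2) * y := by
    intro y hy
    obtain ⟨hy1, hy2⟩ := hy
    have hy0 : 0 < y := lt_trans hL₁ hy1
    rw [Gfun, abs_of_pos hy0]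
    have h1 : y ^ 2 ≤ M * y := by nlinarith
    have h2 : y ^ 3 ≤ M ^ 2 * y := by nlinarith
    have e1 : (L₂ + β₀⁻¹ * (L₁ * L₂ + L₂ ^ 2)) * y ^ 2
        ≤ (L₂ + β₀⁻¹ * (L₁ * L₂ + L₂ ^ 2)) * (M * y) :=
      mul_le_mul_of_nonneg_left h1 (by positivity)
    have e2 : β₀⁻¹ * L₂ ^ 2 * y ^ 3 ≤ β₀⁻¹ * L₂ ^ 2 * (M ^ 2 * y) :=
      mul_le_mul_of_nonneg_left h2 (by positivity)
    nlinarith [e1, e2, mul_le_mul_of_nonneg_right hK hy0.le, hy1.le]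
  -- lower bound the lintegral by the integral of ((L₁+2)*y)⁻¹ over Ioc L₁ M
  have step1 : (∫⁻ y in Set.Ioc L₁ M, ENNReal.ofReal (((L₁ + 2) * y)⁻¹))
      ≤ ∫⁻ y in Set.Ici L₁, ENNReal.ofReal ((Gfun L₁ L₂ β₀ y)⁻¹) := by
    have hsub : Set.Ioc L₁ M ⊆ Set.Ici L₁ :=
      Set.Ioc_subset_Icc_self.trans Set.Icc_subset_Ici_self
    refine le_trans ?_
      (lintegral_mono_set (μ := volume)
        (f := fun y => ENNReal.ofReal ((Gfun L₁ L₂ β₀ y)⁻¹)) hsub)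
    refine setLIntegral_mono_ae
      ((Gfun_continuous L₁ L₂ β₀).measurable.inv.ennreal_ofReal).aemeasurable ?_
    filter_upwards with y hy
    exact ENNReal.ofReal_le_ofReal
      (inv_anti₀ (Gfun_pos L₁ L₂ β₀ hL₁ hL₂ hβ₀ y) (hbound y hy))
  -- integrability and nonnegativity
  have hcontOn : ContinuousOn (fun y : ℝ => ((L₁ + 2) * y)⁻¹) (Set.Icc L₁ M) :=
    (continuousOn_const.mul continuousOn_id).inv₀ (fun y hy => by
      have : 0 < y := lt_of_lt_of_le hL₁ hy.1
      exact mul_ne_zero (by linarith : (0:ℝ) < L₁ + 2).ne' this.ne')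
  have hInt : IntegrableOn (fun y : ℝ => ((L₁ + 2) * y)⁻¹) (Set.Ioc L₁ M) :=
    (hcontOn.integrableOn_Icc).mono_set Set.Ioc_subset_Icc_self
  have hnn : 0 ≤ᵐ[volume.restrict (Set.Ioc L₁ M)] fun y : ℝ => ((L₁ + 2) * y)⁻¹ := by
    filter_upwards [ae_restrict_mem measurableSet_Ioc] with y hy
    have : 0 < y := lt_trans hL₁ hy.1
    positivity
  have heq : (∫⁻ y in Set.Ioc L₁ M, ENNReal.ofReal (((L₁ + 2) * y)⁻¹))
      = ENNReal.ofReal (∫ y in Set.Ioc L₁ M, ((L₁ + 2) * y)⁻¹) :=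
    (ofReal_integral_eq_lintegral_ofReal hInt hnn).symm
  -- compute the integral
  have hval : (∫ y in Set.Ioc L₁ M, ((L₁ + 2) * y)⁻¹) = T + 1 := by
    rw [← intervalIntegral.integral_of_le hM.le]
    have : ∀ y : ℝ, ((L₁ + 2) * y)⁻¹ = (L₁ + 2)⁻¹ * y⁻¹ := fun y => by
      rw [mul_inv]
    simp_rw [this]
    rw [intervalIntegral.integral_const_mul, integral_inv_of_pos hL₁ hMpos]
    have hdiv : M / L₁ = Real.exp ((L₁ + 2) * (T + 1)) := by
      rw [hMdef]; field_simp
    rw [hdiv, Real.log_exp]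
    field_simp
  refine lt_of_lt_of_le ?_ step1
  rw [heq, hval]
  exact (ENNReal.ofReal_lt_ofReal_iff (by linarith)).2 (by linarith)

theorem t_star_negative (T L₁ β₀ : ℝ) (hT : 0 < T) (hL₁ : 0 < L₁) (hβ₀ : 0 < β₀) :
    ∃ δ > 0, ∀ L₂ : ℝ, 0 < L₂ → L₂ < δ →
      ENNReal.ofReal T < ∫⁻ y in Set.Ici L₁, ENNReal.ofReal ((Gfun L₁ L₂ β₀ y)⁻¹) ∧
      ENNReal.ofReal T < ∫⁻ y in Set.Iic (-L₁), ENNReal.ofReal ((Gfun L₁ L₂ β₀ y)⁻¹) := by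
  set M := L₁ * Real.exp ((L₁ + 2) * (T + 1)) with hMdef
  have hMpos : 0 < M := by positivity
  set D := (1 + β₀⁻¹ * L₁) + (1 + β₀⁻¹ * L₁ + β₀⁻¹) * M + β₀⁻¹ * M ^ 2 with hDdef
  have hD : 0 < D := by positivity
  refine ⟨min 1 D⁻¹, by positivity, fun L₂ hL₂ hδ => ?_⟩
  have hL₂1 : L₂ < 1 := lt_of_lt_of_le hδ (min_le_left _ _)
  have hsmall : L₂ * D ≤ 1 := by
    have h' : L₂ ≤ D⁻¹ := le_of_lt (lt_of_lt_of_le hδ (min_le_right _ _))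
    calc L₂ * D ≤ D⁻¹ * D := mul_le_mul_of_nonneg_right h' hD.le
    _ = 1 := inv_mul_cancel₀ hD.ne'
  have h1 := key_lower T L₁ β₀ hT hL₁ hβ₀ M hMdef L₂ hL₂ hL₂1 hsmall
  refine ⟨h1, ?_⟩
  rw [lintegral_Iic_neg]
  simpa [Gfun_neg] using h1
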